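/- Let G(x,y,p) = Σ_{n,k≥0} Σ_{π ∈ C_{n,k}} x^n y^k p^{sv(π)}, a well-defined formal power series in ℚ[[x,y,p]]. For each integer a ≥ 1 let B_a = 1 − y²·x^{a+1}·(p−1)·(1 + x + ⋯ + x^{a−2}) ∈ ℚ[[x,y,p]] (so B₁ = 1); each B_a has constant term 1 and is invertible. Then G · (1 − Σ_{a≥1} x^a·y·B_a^{−1}) = 1, where the sum over a converges coefficientwise since the a-th summand has x-adic order at least a. Equivalently, G(x,y,p) = 1/(1 − Σ_{a≥1} x^a y/(1 − y²x^{a+1}(x^{a−1}−1)(p−1)/(x−1))). -/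

import Mathlib

/-- The indices (0-based) of symmetric valleys of a list of naturals:
`i` is a symmetric valley if `L i > L (i+1)` and `L i = L (i+2)`. -/
def symValleyIdx (L : List ℕ) : Finset ℕ :=
  (Finset.range L.length).filter (fun i =>
    i + 2 < L.length ∧ L.getD i 0 > L.getD (i+1) 0 ∧ L.getD i 0 = L.getD (i+2) 0)

/-- `sv π`: the number of symmetric valleys of `π`. -/
def svL (L : List ℕ) : ℕ := (symValleyIdx L).card

/-- Variables: `X 0 = x`, `X 1 = y`, `X 2 = p`. -/
noncomputable abbrev Xv : Fin 3 → MvPowerSeries (Fin 3) ℚ := MvPowerSeries.X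

/-- `G(x,y,p) = Σ_{n,k≥0} Σ_{π ∈ C_{n,k}} x^n y^k p^{sv(π)}`, defined coefficientwise. -/
noncomputable def Gsv : MvPowerSeries (Fin 3) ℚ := fun m =>
  ((Finset.univ : Finset (Composition (m 0))).filter (fun c =>
    c.length = m 1 ∧ svL c.blocks = m 2)).card

/-- `B_a = 1 − y²·x^{a+1}·(p−1)·(1 + x + ⋯ + x^{a−2})` (so `B₁ = 1`); this is the
power-series meaning of `1 − y²x^{a+1}(x^{a−1}−1)(p−1)/(x−1)`. -/
noncomputable def Bsv (a : ℕ) : MvPowerSeries (Fin 3) ℚ :=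
  1 - (Xv 1)^2 * (Xv 0)^(a+1) * (Xv 2 - 1) * ∑ j ∈ Finset.range (a - 1), (Xv 0)^j

/-- `Σ_{a≥1} x^a·y·B_a⁻¹`, defined coefficientwise: since the `a`-th summand has `x`-adic
order at least `a`, only the terms with `1 ≤ a ≤ m 0` contribute to the coefficient of a
monomial `m`. -/
noncomputable def Ssv : MvPowerSeries (Fin 3) ℚ := fun m =>
  ∑ a ∈ Finset.Icc 1 (m 0), MvPowerSeries.coeff m ((Xv 0)^a * Xv 1 * (Bsv a)⁻¹)

def patP (a : ℕ) (L : List ℕ) : Prop :=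
  2 ≤ L.length ∧ L.getD 0 0 < a ∧ a = L.getD 1 0

instance (a : ℕ) (L : List ℕ) : Decidable (patP a L) := by unfold patP; infer_instance

lemma mem_symValleyIdx {L : List ℕ} {i : ℕ} :
    i ∈ symValleyIdx L ↔
      i + 2 < L.length ∧ L.getD i 0 > L.getD (i+1) 0 ∧ L.getD i 0 = L.getD (i+2) 0 := by
  simp only [symValleyIdx, Finset.mem_filter, Finset.mem_range]
  exact ⟨fun h => h.2, fun h => ⟨by omega, h⟩⟩

lemma symValleyIdx_cons (x : ℕ) (L : List ℕ) :
    symValleyIdx (x :: L) =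
      (if patP x L then {0} else ∅) ∪ (symValleyIdx L).image Nat.succ := by
  ext i
  rw [Finset.mem_union, mem_symValleyIdx]
  cases i with
  | zero =>
    simp only [List.getD_cons_zero, List.getD_cons_succ, List.length_cons, Finset.mem_image]
    constructor
    · rintro ⟨h1, h2, h3⟩
      left
      rw [if_pos ⟨by omega, h2, h3⟩]
      exact Finset.mem_singleton_self 0
    · rintro (h | ⟨a, _, h⟩)
      · by_cases hp : patP x L
        · exact ⟨by have := hp.1; omega, hp.2.1, hp.2.2⟩
        · rw [if_neg hp] at h; exact absurd h (Finset.notMem_empty 0)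
      · exact absurd h (Nat.succ_ne_zero a)
  | succ n =>
    simp only [List.getD_cons_succ, List.length_cons, Finset.mem_image, Nat.add_lt_add_iff_right]
    constructor
    · rintro ⟨h1, h2, h3⟩
      right
      exact ⟨n, mem_symValleyIdx.2 ⟨by omega, h2, h3⟩, rfl⟩
    · rintro (h | ⟨a, ha, h⟩)
      · split at h
        · exact absurd (Finset.mem_singleton.1 h) (Nat.succ_ne_zero n)
        · exact absurd h (Finset.notMem_empty _)
      · obtain rfl : a = n := Nat.succ_injective h
        obtain ⟨h1, h2, h3⟩ := mem_symValleyIdx.1 ha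
        exact ⟨by omega, h2, h3⟩

lemma sv_cons (x : ℕ) (L : List ℕ) :
    svL (x :: L) = svL L + (if patP x L then 1 else 0) := by
  rw [svL, symValleyIdx_cons, Finset.card_union_of_disjoint,
    Finset.card_image_of_injective _ Nat.succ_injective]
  · split <;> simp [svL, Nat.add_comm]
  · rw [Finset.disjoint_left]
    intro i hi h0
    simp only [Finset.mem_image] at h0
    obtain ⟨a, _, rfl⟩ := h0
    split at hi
    · exact absurd (Finset.mem_singleton.1 hi) (Nat.succ_ne_zero a)
    · exact absurd hi (Finset.notMem_empty _)

def CF (n : ℕ) : Finset (List ℕ) :=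
  (Finset.univ : Finset (Composition n)).image Composition.blocks

lemma mem_CF {n : ℕ} {L : List ℕ} : L ∈ CF n ↔ L.sum = n ∧ ∀ x ∈ L, 0 < x := by
  constructor
  · intro h
    obtain ⟨c, _, rfl⟩ := Finset.mem_image.1 h
    exact ⟨c.blocks_sum, fun x hx => c.blocks_pos hx⟩
  · rintro ⟨h1, h2⟩
    exact Finset.mem_image.2 ⟨⟨L, fun hx => h2 _ hx, h1⟩, Finset.mem_univ _, rfl⟩

lemma blocks_injective (n : ℕ) : Function.Injective (Composition.blocks (n := n)) := by
  intro c1 c2 h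
  cases c1; cases c2; simpa using h

def Nc (n k s : ℕ) : ℕ := ((CF n).filter fun L => L.length = k ∧ svL L = s).card

def Fc (a n k s : ℕ) : ℕ := ((CF n).filter fun L => L.length = k ∧ svL (a :: L) = s).card

lemma Gsv_apply (m : Fin 3 →₀ ℕ) : Gsv m = (Nc (m 0) (m 1) (m 2) : ℚ) := by
  have : ((Finset.univ : Finset (Composition (m 0))).filter (fun c =>
      c.length = m 1 ∧ svL c.blocks = m 2)).card = Nc (m 0) (m 1) (m 2) := by
    rw [Nc, CF, Finset.filter_image, Finset.card_image_of_injective _ (blocks_injective _)]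
  rw [← this]
  rfl

lemma key1 (n k s : ℕ) :
    Nc n (k+1) s = ∑ a ∈ Finset.Icc 1 n, Fc a (n - a) k s := by
  classical
  rw [Nc, Finset.card_eq_sum_card_fiberwise (f := fun L => L.headI)
    (t := Finset.Icc 1 n) ?hmaps]
  case hmaps =>
    intro L hL
    simp only [Finset.mem_coe, Finset.mem_filter] at hL
    obtain ⟨hmem, hlen, _⟩ := hL
    obtain ⟨hsum, hpos⟩ := mem_CF.1 hmem
    cases L with
    | nil => simp at hlen
    | cons x T =>
      simp only [List.headI]
      refine Finset.mem_Icc.2 ⟨hpos x (by simp), ?_⟩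
      simp only [List.sum_cons] at hsum
      omega
  refine Finset.sum_congr rfl (fun a ha => ?_)
  obtain ⟨ha1, han⟩ := Finset.mem_Icc.1 ha
  rw [Fc]
  refine Finset.card_nbij' (fun L => L.tail) (fun T => a :: T) ?_ ?_ ?_ ?_
  · intro L hL
    simp only [Finset.mem_coe, Finset.mem_filter] at hL ⊢
    obtain ⟨⟨hmem, hlen, hsv⟩, hhead⟩ := hL
    obtain ⟨hsum, hpos⟩ := mem_CF.1 hmem
    cases L with
    | nil => simp at hlen
    | cons x T =>
      simp only [List.headI] at hhead
      subst hhead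
      simp only [List.sum_cons] at hsum
      simp only [List.tail_cons]
      refine ⟨mem_CF.2 ⟨by omega, fun y hy => hpos y (by simp [hy])⟩, by simpa using hlen, hsv⟩
  · intro T hT
    simp only [Finset.mem_coe, Finset.mem_filter] at hT ⊢
    obtain ⟨hmem, hlen, hsv⟩ := hT
    obtain ⟨hsum, hpos⟩ := mem_CF.1 hmem
    refine ⟨⟨mem_CF.2 ⟨by simp [hsum]; omega, ?_⟩, by simpa using hlen, hsv⟩, rfl⟩
    intro y hy
    rcases List.mem_cons.1 hy with rfl | hy
    · omega
    · exact hpos y hy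
  · intro L hL
    simp only [Finset.mem_coe, Finset.mem_filter] at hL
    obtain ⟨⟨hmem, hlen, _⟩, hhead⟩ := hL
    cases L with
    | nil => simp at hlen
    | cons x T => simp only [List.headI] at hhead; subst hhead; rfl
  · intro T _
    rfl

lemma CF_zero : CF 0 = {([] : List ℕ)} := by
  ext L
  rw [mem_CF]
  constructor
  · rintro ⟨h1, h2⟩
    cases L with
    | nil => simp
    | cons x T =>
      simp only [List.sum_cons] at h1
      have := h2 x (by simp)
      omega
  · rintro h
    simp only [Finset.mem_singleton] at h
    subst h
    simp

lemma Nc_k0 (n s : ℕ) : Nc n 0 s = if n = 0 ∧ s = 0 then 1 else 0 := by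
  rw [Nc]
  split
  · next h =>
    obtain ⟨rfl, rfl⟩ := h
    rw [CF_zero]
    rfl
  · next h =>
    rw [Finset.card_eq_zero, Finset.filter_eq_empty_iff]
    intro L hL
    obtain ⟨h1, _⟩ := mem_CF.1 hL
    rintro ⟨hlen, hsv⟩
    rw [List.length_eq_zero_iff] at hlen
    subst hlen
    simp only [List.sum_nil] at h1
    have : svL [] = 0 := rfl
    omega

lemma Nc_n0 (k s : ℕ) : Nc 0 k s = if k = 0 ∧ s = 0 then 1 else 0 := by
  rw [Nc, CF_zero]
  split
  · next h => obtain ⟨rfl, rfl⟩ := h; rfl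
  · next h =>
    rw [Finset.card_eq_zero, Finset.filter_eq_empty_iff]
    intro L hL
    simp only [Finset.mem_singleton] at hL
    subst hL
    rintro ⟨hlen, hsv⟩
    simp only [List.length_nil] at hlen
    have : svL [] = 0 := rfl
    omega

def Pc (a n k t : ℕ) : ℕ :=
  ((CF n).filter fun L => (L.length = k ∧ svL L = t) ∧ patP a L).card

def Qc (a n k t : ℕ) : ℕ :=
  ((CF n).filter fun L => (L.length = k ∧ svL L = t) ∧ ¬ patP a L).card

lemma nsplit (a n k s : ℕ) : Nc n k s = Pc a n k s + Qc a n k s := by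
  rw [Nc, Pc, Qc, ← Finset.card_filter_add_card_filter_not
    (s := (CF n).filter fun L => L.length = k ∧ svL L = s) (p := fun L => patP a L),
    Finset.filter_filter, Finset.filter_filter]

lemma fsplit (a n k s : ℕ) :
    Fc a n k s = (if 1 ≤ s then Pc a n k (s-1) else 0) + Qc a n k s := by
  rw [Fc, ← Finset.card_filter_add_card_filter_not
    (s := (CF n).filter fun L => L.length = k ∧ svL (a :: L) = s) (p := fun L => patP a L),
    Finset.filter_filter, Finset.filter_filter]
  congr 1
  · split
    · next hs =>
      rw [Pc]
      congr 1
      apply Finset.filter_congr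
      intro L _
      simp only [sv_cons, decide_eq_true_eq]
      constructor
      · rintro ⟨⟨hlen, hsv⟩, hp⟩
        rw [if_pos hp] at hsv
        exact ⟨⟨hlen, by omega⟩, hp⟩
      · rintro ⟨⟨hlen, hsv⟩, hp⟩
        exact ⟨⟨hlen, by rw [if_pos hp]; omega⟩, hp⟩
    · next hs =>
      rw [Finset.card_eq_zero, Finset.filter_eq_empty_iff]
      intro L _
      rintro ⟨⟨hlen, hsv⟩, hp⟩
      rw [sv_cons, if_pos hp] at hsv
      omega
  · rw [Qc]
    congr 1
    apply Finset.filter_congr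
    intro L _
    simp only [sv_cons, decide_eq_true_eq]
    constructor
    · rintro ⟨⟨hlen, hsv⟩, hp⟩
      rw [if_neg hp] at hsv
      exact ⟨⟨hlen, by omega⟩, hp⟩
    · rintro ⟨⟨hlen, hsv⟩, hp⟩
      exact ⟨⟨hlen, by rw [if_neg hp]; omega⟩, hp⟩

lemma exists_cons_cons {L : List ℕ} (h : 2 ≤ L.length) : ∃ x y R, L = x :: y :: R := by
  match L with
  | x :: y :: R => exact ⟨x, y, R, rfl⟩
  | [] => simp at h
  | [x] => simp at h

lemma keyP (a n k t : ℕ) :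
    Pc a n k t = ∑ b ∈ Finset.Icc 1 (a-1),
      (if a + b ≤ n ∧ 2 ≤ k then Fc a (n - (a+b)) (k-2) t else 0) := by
  classical
  rw [Pc, Finset.card_eq_sum_card_fiberwise (f := fun L => L.headI)
    (t := Finset.Icc 1 (a-1)) ?hmaps]
  case hmaps =>
    intro L hL
    simp only [Finset.mem_coe, Finset.mem_filter] at hL
    obtain ⟨hmem, _, hl2, hlt, hget⟩ := hL
    obtain ⟨hsum, hpos⟩ := mem_CF.1 hmem
    obtain ⟨x, y, R, rfl⟩ := exists_cons_cons hl2
    simp only [List.headI]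
    simp only [List.getD_cons_zero] at hlt
    exact Finset.mem_Icc.2 ⟨hpos x (by simp), by omega⟩
  refine Finset.sum_congr rfl (fun b hb => ?_)
  obtain ⟨hb1, hba⟩ := Finset.mem_Icc.1 hb
  by_cases hg : a + b ≤ n ∧ 2 ≤ k
  · rw [if_pos hg, Fc]
    refine Finset.card_nbij' (fun L => L.tail.tail) (fun T => b :: a :: T) ?_ ?_ ?_ ?_
    · intro L hL
      simp only [Finset.mem_coe, Finset.mem_filter] at hL ⊢
      obtain ⟨⟨hmem, ⟨hlen, hsv⟩, hl2, hlt, hget⟩, hhead⟩ := hL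
      obtain ⟨hsum, hpos⟩ := mem_CF.1 hmem
      obtain ⟨x, y, R, rfl⟩ := exists_cons_cons hl2
      simp only [List.headI] at hhead
      simp only [List.getD_cons_zero] at hlt
      simp only [List.getD_cons_succ, List.getD_cons_zero] at hget
      simp only [List.sum_cons] at hsum
      simp only [List.length_cons] at hlen
      simp only [List.tail_cons]
      rw [sv_cons] at hsv
      rw [if_neg ?hpat] at hsv
      case hpat =>
        rintro ⟨_, hcon, _⟩
        simp only [List.getD_cons_zero] at hcon
        omega
      rw [sv_cons] at hsv
      refine ⟨mem_CF.2 ⟨by omega, fun z hz => hpos z (by simp [hz])⟩, by omega, ?_⟩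
      rw [sv_cons]
      have hya : y = a := hget.symm
      subst hya
      omega
    · intro T hT
      simp only [Finset.mem_coe, Finset.mem_filter] at hT ⊢
      obtain ⟨hmem, hlen, hsv⟩ := hT
      obtain ⟨hsum, hpos⟩ := mem_CF.1 hmem
      refine ⟨⟨mem_CF.2 ⟨by simp only [List.sum_cons]; omega, ?_⟩, ⟨?_, ?_⟩, ?_, ?_, ?_⟩, rfl⟩
      · intro z hz
        rcases List.mem_cons.1 hz with rfl | hz
        · omega
        · rcases List.mem_cons.1 hz with rfl | hz
          · omega
          · exact hpos z hz
      · simp only [List.length_cons]; omega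
      · rw [sv_cons, if_neg ?hpat2]
        case hpat2 =>
          rintro ⟨_, hcon, _⟩
          simp only [List.getD_cons_zero] at hcon
          omega
        omega
      · simp only [List.length_cons]; omega
      · simp only [List.getD_cons_zero]; omega
      · simp only [List.getD_cons_succ, List.getD_cons_zero]
    · intro L hL
      simp only [Finset.mem_coe, Finset.mem_filter] at hL
      obtain ⟨⟨hmem, ⟨hlen, hsv⟩, hl2, hlt, hget⟩, hhead⟩ := hL
      obtain ⟨x, y, R, rfl⟩ := exists_cons_cons hl2
      simp only [List.headI] at hhead
      simp only [List.getD_cons_succ, List.getD_cons_zero] at hget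
      simp only [List.tail_cons]
      rw [hhead, ← hget]
    · intro T _
      rfl
  · rw [if_neg hg]
    rw [Finset.card_eq_zero, Finset.filter_eq_empty_iff]
    intro L hL hhead
    simp only [Finset.mem_coe, Finset.mem_filter] at hL
    obtain ⟨hmem, ⟨hlen, hsv⟩, hl2, hlt, hget⟩ := hL
    obtain ⟨hsum, hpos⟩ := mem_CF.1 hmem
    apply hg
    obtain ⟨x, y, R, rfl⟩ := exists_cons_cons hl2
    simp only [List.headI] at hhead
    simp only [List.getD_cons_succ, List.getD_cons_zero] at hget
    simp only [List.sum_cons] at hsum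
    simp only [List.length_cons] at hlen
    omega

lemma key2 (a n k s : ℕ) :
    (Fc a n k s) + ∑ j ∈ Finset.range (a-1),
      (if a+1+j ≤ n ∧ 2 ≤ k then Fc a (n-(a+1+j)) (k-2) s else 0)
    = Nc n k s + ∑ j ∈ Finset.range (a-1),
      (if a+1+j ≤ n ∧ 2 ≤ k ∧ 1 ≤ s then Fc a (n-(a+1+j)) (k-2) (s-1) else 0) := by
  have hre : ∀ t : ℕ, ∑ b ∈ Finset.Icc 1 (a-1),
      (if a + b ≤ n ∧ 2 ≤ k then Fc a (n - (a+b)) (k-2) t else 0)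
      = ∑ j ∈ Finset.range (a-1), (if a+1+j ≤ n ∧ 2 ≤ k then Fc a (n-(a+1+j)) (k-2) t else 0) := by
    intro t
    refine Finset.sum_nbij' (fun b => b - 1) (fun j => j + 1) ?_ ?_ ?_ ?_ ?_
    · intro b hb
      simp only [Finset.mem_Icc] at hb
      simp only [Finset.mem_range]
      omega
    · intro j hj
      simp only [Finset.mem_range] at hj
      simp only [Finset.mem_Icc]
      omega
    · intro b hb
      simp only [Finset.mem_Icc] at hb
      omega
    · intro j _
      omega
    · intro b hb
      simp only [Finset.mem_Icc] at hb
      have h2 : a + 1 + (b - 1) = a + b := by omega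
      rw [h2]
  have hsplit : ∑ j ∈ Finset.range (a-1),
      (if a+1+j ≤ n ∧ 2 ≤ k ∧ 1 ≤ s then Fc a (n-(a+1+j)) (k-2) (s-1) else 0)
      = if 1 ≤ s then ∑ j ∈ Finset.range (a-1),
        (if a+1+j ≤ n ∧ 2 ≤ k then Fc a (n-(a+1+j)) (k-2) (s-1) else 0) else 0 := by
    split
    · next hs =>
      apply Finset.sum_congr rfl
      intro j _
      by_cases hg : a+1+j ≤ n ∧ 2 ≤ k
      · rw [if_pos ⟨hg.1, hg.2, hs⟩, if_pos hg]
      · rw [if_neg (by tauto), if_neg hg]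
    · next hs =>
      apply Finset.sum_eq_zero
      intro j _
      rw [if_neg (by tauto)]
  rw [← hre s, hsplit, ← hre (s-1)]
  have h1 := fsplit a n k s
  have h2 := nsplit a n k s
  have h3 := keyP a n k s
  have h4 : (if 1 ≤ s then ∑ b ∈ Finset.Icc 1 (a-1),
      (if a + b ≤ n ∧ 2 ≤ k then Fc a (n - (a+b)) (k-2) (s-1) else 0) else 0)
      = if 1 ≤ s then Pc a n k (s-1) else 0 := by
    split
    · rw [keyP]
    · rfl
  rw [h1, h2, ← h3, h4]
  split_ifs <;> omega

noncomputable def Fsv (a : ℕ) : MvPowerSeries (Fin 3) ℚ := fun m =>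
  (Fc a (m 0) (m 1) (m 2) : ℚ)

noncomputable def EX (c0 c1 c2 : ℕ) : Fin 3 →₀ ℕ :=
  Finsupp.single 0 c0 + Finsupp.single 1 c1 + Finsupp.single 2 c2

@[simp] lemma EX_apply0 (c0 c1 c2 : ℕ) : EX c0 c1 c2 0 = c0 := by
  simp [EX, Finsupp.single_apply]

@[simp] lemma EX_apply1 (c0 c1 c2 : ℕ) : EX c0 c1 c2 1 = c1 := by
  simp [EX, Finsupp.single_apply]

@[simp] lemma EX_apply2 (c0 c1 c2 : ℕ) : EX c0 c1 c2 2 = c2 := by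
  simp [EX, Finsupp.single_apply]

lemma EX_le {c0 c1 c2 : ℕ} {m : Fin 3 →₀ ℕ} :
    EX c0 c1 c2 ≤ m ↔ c0 ≤ m 0 ∧ c1 ≤ m 1 ∧ c2 ≤ m 2 := by
  rw [Finsupp.le_def]
  constructor
  · intro h
    refine ⟨?_, ?_, ?_⟩
    · simpa using h 0
    · simpa using h 1
    · simpa using h 2
  · rintro ⟨h0, h1, h2⟩ i
    fin_cases i
    · simpa using h0
    · simpa using h1
    · simpa using h2

lemma eq_zero_iff3 {m : Fin 3 →₀ ℕ} : m = 0 ↔ m 0 = 0 ∧ m 1 = 0 ∧ m 2 = 0 := by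
  rw [Finsupp.ext_iff]
  constructor
  · intro h
    exact ⟨h 0, h 1, h 2⟩
  · rintro ⟨h0, h1, h2⟩ i
    fin_cases i
    · simpa using h0
    · simpa using h1
    · simpa using h2

lemma XaY_eq (a : ℕ) :
    (Xv 0)^a * Xv 1 = MvPowerSeries.monomial (EX a 1 0) 1 := by
  simp only [Xv]
  rw [MvPowerSeries.X_pow_eq, MvPowerSeries.X_def, MvPowerSeries.monomial_mul_monomial, one_mul]
  exact congrArg (fun e => (MvPowerSeries.monomial e) (1:ℚ))
    (Finsupp.ext fun i => by fin_cases i <;> simp [EX, Finsupp.single_apply] <;> omega)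

lemma term_eq (a j : ℕ) :
    (Xv 1)^2 * (Xv 0)^(a+1) * (Xv 2 - 1) * (Xv 0)^j
      = MvPowerSeries.monomial (EX (a+1+j) 2 1) 1
        - MvPowerSeries.monomial (EX (a+1+j) 2 0) 1 := by
  have h1 : (Xv 1)^2 * (Xv 0)^(a+1) * Xv 2 * (Xv 0)^j
      = MvPowerSeries.monomial (EX (a+1+j) 2 1) 1 := by
    simp only [Xv]
    rw [MvPowerSeries.X_pow_eq, MvPowerSeries.X_pow_eq, MvPowerSeries.X_def,
      MvPowerSeries.X_pow_eq, MvPowerSeries.monomial_mul_monomial,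
      MvPowerSeries.monomial_mul_monomial, MvPowerSeries.monomial_mul_monomial, one_mul, one_mul,
      one_mul]
    exact congrArg (fun e => (MvPowerSeries.monomial e) (1:ℚ))
      (Finsupp.ext fun i => by fin_cases i <;> simp [EX, Finsupp.single_apply] <;> omega)
  have h2 : (Xv 1)^2 * (Xv 0)^(a+1) * (Xv 0)^j
      = MvPowerSeries.monomial (EX (a+1+j) 2 0) 1 := by
    simp only [Xv]
    rw [MvPowerSeries.X_pow_eq, MvPowerSeries.X_pow_eq, MvPowerSeries.X_pow_eq,
      MvPowerSeries.monomial_mul_monomial, MvPowerSeries.monomial_mul_monomial, one_mul, one_mul]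
    exact congrArg (fun e => (MvPowerSeries.monomial e) (1:ℚ))
      (Finsupp.ext fun i => by fin_cases i <;> simp [EX, Finsupp.single_apply] <;> omega)
  rw [← h1, ← h2]
  ring

lemma Bsv_eq (a : ℕ) : Bsv a = 1 - ∑ j ∈ Finset.range (a-1),
    (MvPowerSeries.monomial (EX (a+1+j) 2 1) 1 - MvPowerSeries.monomial (EX (a+1+j) 2 0) 1) := by
  rw [Bsv, Finset.mul_sum]
  congr 1
  exact Finset.sum_congr rfl (fun j _ => term_eq a j)

lemma Fsv_coeff (a : ℕ) (d : Fin 3 →₀ ℕ) :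
    MvPowerSeries.coeff d (Fsv a) = (Fc a (d 0) (d 1) (d 2) : ℚ) := rfl

lemma Gsv_coeff (d : Fin 3 →₀ ℕ) :
    MvPowerSeries.coeff d Gsv = (Nc (d 0) (d 1) (d 2) : ℚ) := Gsv_apply d

lemma FB (a : ℕ) : Fsv a * Bsv a = Gsv := by
  apply MvPowerSeries.ext
  intro m
  rw [Bsv_eq, mul_sub, mul_one, Finset.mul_sum, map_sub, map_sum, Gsv_coeff]
  have hterm : ∀ j ∈ Finset.range (a-1), MvPowerSeries.coeff m (Fsv a *
      (MvPowerSeries.monomial (EX (a+1+j) 2 1) 1 - MvPowerSeries.monomial (EX (a+1+j) 2 0) 1))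
      = (if a+1+j ≤ m 0 ∧ 2 ≤ m 1 ∧ 1 ≤ m 2 then
            (Fc a (m 0 - (a+1+j)) (m 1 - 2) (m 2 - 1) : ℚ) else 0)
        - (if a+1+j ≤ m 0 ∧ 2 ≤ m 1 then (Fc a (m 0 - (a+1+j)) (m 1 - 2) (m 2) : ℚ) else 0) := by
    intro j _
    rw [mul_sub, map_sub, MvPowerSeries.coeff_mul_monomial, MvPowerSeries.coeff_mul_monomial]
    simp only [mul_one, Fsv_coeff, Finsupp.tsub_apply, EX_apply0, EX_apply1, EX_apply2, EX_le,
      Nat.zero_le, and_true, Nat.sub_zero]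
  rw [Finset.sum_congr rfl hterm, Finset.sum_sub_distrib]
  have hk := key2 a (m 0) (m 1) (m 2)
  have hkq : (Fc a (m 0) (m 1) (m 2) : ℚ) + ∑ j ∈ Finset.range (a-1),
      (if a+1+j ≤ m 0 ∧ 2 ≤ m 1 then (Fc a (m 0 -(a+1+j)) (m 1 -2) (m 2) : ℚ) else 0)
      = (Nc (m 0) (m 1) (m 2) : ℚ) + ∑ j ∈ Finset.range (a-1),
      (if a+1+j ≤ m 0 ∧ 2 ≤ m 1 ∧ 1 ≤ m 2 then (Fc a (m 0 -(a+1+j)) (m 1 -2) (m 2 -1) : ℚ) else 0) := by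
    exact_mod_cast hk
  have hF : MvPowerSeries.coeff m (Fsv a) = (Fc a (m 0) (m 1) (m 2) : ℚ) := rfl
  rw [hF]
  push_cast
  push_cast at hkq
  linarith

lemma constCoeff_Bsv (a : ℕ) : MvPowerSeries.constantCoeff (Bsv a) = 1 := by
  simp [Bsv, map_sub, map_mul, map_pow, MvPowerSeries.constantCoeff_X]

lemma Fsv_eq (a : ℕ) : Fsv a = Gsv * (Bsv a)⁻¹ := by
  rw [MvPowerSeries.eq_mul_inv_iff_mul_eq (by rw [constCoeff_Bsv]; norm_num)]
  exact FB a

lemma coeff_vanish {j : Fin 3 →₀ ℕ} {a : ℕ} (h : j 0 < a) (ψ : MvPowerSeries (Fin 3) ℚ) :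
    MvPowerSeries.coeff j ((Xv 0)^a * Xv 1 * ψ) = 0 := by
  rw [XaY_eq, MvPowerSeries.coeff_monomial_mul, if_neg]
  rw [EX_le]
  push_neg
  intro hc
  omega

lemma Gsv_rec (m : Fin 3 →₀ ℕ) :
    MvPowerSeries.coeff m Gsv = (if m = 0 then 1 else 0)
      + ∑ a ∈ Finset.Icc 1 (m 0), MvPowerSeries.coeff m ((Xv 0)^a * Xv 1 * Fsv a) := by
  have hterm : ∀ a ∈ Finset.Icc 1 (m 0), MvPowerSeries.coeff m ((Xv 0)^a * Xv 1 * Fsv a)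
      = (if 1 ≤ m 1 then (Fc a (m 0 - a) (m 1 - 1) (m 2) : ℚ) else 0) := by
    intro a ha
    obtain ⟨_, ha2⟩ := Finset.mem_Icc.1 ha
    rw [XaY_eq, MvPowerSeries.coeff_monomial_mul]
    simp only [one_mul, Fsv_coeff, Finsupp.tsub_apply, EX_apply0, EX_apply1, EX_apply2, EX_le,
      Nat.zero_le, and_true, Nat.sub_zero]
    by_cases h : 1 ≤ m 1
    · rw [if_pos ⟨ha2, h⟩, if_pos h]
    · rw [if_neg (fun hc => h hc.2), if_neg h]
  rw [Finset.sum_congr rfl hterm, Gsv_coeff]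
  rcases Nat.eq_zero_or_pos (m 1) with hk | hk
  · rw [Finset.sum_eq_zero (fun a _ => by rw [if_neg (by omega)]), hk, Nc_k0, add_zero]
    by_cases hm0 : m 0 = 0 ∧ m 2 = 0
    · rw [if_pos hm0, if_pos (eq_zero_iff3.2 ⟨hm0.1, hk, hm0.2⟩)]
      norm_num
    · have hm : m ≠ 0 := by
        intro h
        exact hm0 ⟨(eq_zero_iff3.1 h).1, (eq_zero_iff3.1 h).2.2⟩
      rw [if_neg hm0, if_neg hm]
      norm_num
  · have hm : m ≠ 0 := by
      intro h
      rw [h] at hk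
      simp at hk
    have hsum : ∑ a ∈ Finset.Icc 1 (m 0),
        (if 1 ≤ m 1 then (Fc a (m 0 - a) (m 1 - 1) (m 2) : ℚ) else 0)
        = ∑ a ∈ Finset.Icc 1 (m 0), (Fc a (m 0 - a) (m 1 - 1) (m 2) : ℚ) :=
      Finset.sum_congr rfl (fun a _ => if_pos hk)
    rw [if_neg hm, hsum, zero_add]
    have hkey := key1 (m 0) (m 1 - 1) (m 2)
    rw [Nat.sub_add_cancel hk] at hkey
    exact_mod_cast hkey

lemma GS_swap (m : Fin 3 →₀ ℕ) :
    MvPowerSeries.coeff m (Gsv * Ssv) = ∑ a ∈ Finset.Icc 1 (m 0),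
      MvPowerSeries.coeff m ((Xv 0)^a * Xv 1 * Fsv a) := by
  rw [MvPowerSeries.coeff_mul]
  have hS : ∀ p ∈ Finset.HasAntidiagonal.antidiagonal m, MvPowerSeries.coeff p.2 Ssv
      = ∑ a ∈ Finset.Icc 1 (m 0),
        MvPowerSeries.coeff p.2 ((Xv 0)^a * Xv 1 * (Bsv a)⁻¹) := by
    intro p hp
    have hle : p.2 0 ≤ m 0 := by
      rw [Finset.HasAntidiagonal.mem_antidiagonal] at hp
      have h2 : (p.1 + p.2) 0 = m 0 := by rw [hp]
      rw [Finsupp.add_apply] at h2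
      omega
    have h0 : MvPowerSeries.coeff p.2 Ssv = ∑ a ∈ Finset.Icc 1 (p.2 0),
        MvPowerSeries.coeff p.2 ((Xv 0)^a * Xv 1 * (Bsv a)⁻¹) := rfl
    rw [h0]
    apply Finset.sum_subset (Finset.Icc_subset_Icc_right hle)
    intro a ha hna
    simp only [Finset.mem_Icc] at ha hna
    exact coeff_vanish (by omega) _
  have h1 : ∑ p ∈ Finset.HasAntidiagonal.antidiagonal m,
        MvPowerSeries.coeff p.1 Gsv * MvPowerSeries.coeff p.2 Ssv
      = ∑ p ∈ Finset.HasAntidiagonal.antidiagonal m, ∑ a ∈ Finset.Icc 1 (m 0),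
        MvPowerSeries.coeff p.1 Gsv *
          MvPowerSeries.coeff p.2 ((Xv 0)^a * Xv 1 * (Bsv a)⁻¹) := by
    refine Finset.sum_congr rfl (fun p hp => ?_)
    rw [hS p hp, Finset.mul_sum]
  rw [h1, Finset.sum_comm]
  refine Finset.sum_congr rfl (fun a _ => ?_)
  rw [← MvPowerSeries.coeff_mul]
  congr 1
  rw [Fsv_eq a]
  ring

/-- `G·(1 − Σ_{a≥1} x^a y B_a⁻¹) = 1`, i.e.
`G(x,y,p) = 1/(1 − Σ_{a≥1} x^a y/(1 − y²x^{a+1}(x^{a−1}−1)(p−1)/(x−1)))`. -/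
theorem sv_generating_function : Gsv * (1 - Ssv) = 1 := by
  apply MvPowerSeries.ext
  intro m
  rw [mul_sub, mul_one, map_sub, GS_swap, MvPowerSeries.coeff_one, Gsv_rec m]
  ring
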